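/- For every real x with x > −1, log(1 + x) − x = −x²/(2 + x) + 2 · Σ_{n=1}^{∞} (1/(2n+1)) · (x/(2+x))^{2n+1}, where the series on the right converges. -/
import Mathlib

theorem stmt_17 (x : ℝ) (hx : -1 < x) :
    Summable (fun n : ℕ => 1 / (2 * ((n : ℝ) + 1) + 1) * (x / (2 + x)) ^ (2 * (n + 1) + 1)) ∧
    Real.log (1 + x) - x
      = -x ^ 2 / (2 + x)
        + 2 * ∑' n : ℕ, 1 / (2 * ((n : ℝ) + 1) + 1) * (x / (2 + x)) ^ (2 * (n + 1) + 1) := by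
  have h2x : (0 : ℝ) < 2 + x := by linarith
  set y := x / (2 + x) with hy
  have hylt : |y| < 1 := by
    rw [abs_div, abs_of_pos h2x, div_lt_one h2x]
    rcases abs_cases x with ⟨h, _⟩ | ⟨h, _⟩ <;> linarith
  have hsum := Real.hasSum_log_sub_log_of_abs_lt_one hylt
  have hlog : Real.log (1 + y) - Real.log (1 - y) = Real.log (1 + x) := by
    rw [← Real.log_div, hy]
    · congr 1
      field_simp
      ring
    · have : 1 + y > 0 := by
        rcases abs_cases y with ⟨h, _⟩ | ⟨h, _⟩ <;> linarith [hylt]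
      linarith
    · have : 1 - y > 0 := by
        rcases abs_cases y with ⟨h, _⟩ | ⟨h, _⟩ <;> linarith [hylt]
      linarith
  rw [hlog] at hsum
  set f : ℕ → ℝ := fun k => (2 : ℝ) * (1 / (2 * k + 1)) * y ^ (2 * k + 1) with hf
  have htail : HasSum (fun n : ℕ => f (n + 1)) (Real.log (1 + x) - f 0) := by
    rw [hasSum_nat_add_iff 1]
    simpa using hsum
  have heq : (fun n : ℕ => 1 / (2 * ((n : ℝ) + 1) + 1) * y ^ (2 * (n + 1) + 1))
      = fun n : ℕ => (1 / 2 : ℝ) * f (n + 1) := by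
    funext n
    simp only [hf]
    push_cast
    ring
  have htail2 : HasSum (fun n : ℕ => 1 / (2 * ((n : ℝ) + 1) + 1) * y ^ (2 * (n + 1) + 1))
      ((1 / 2 : ℝ) * (Real.log (1 + x) - f 0)) := by
    rw [heq]; exact htail.mul_left _
  refine ⟨htail2.summable, ?_⟩
  rw [htail2.tsum_eq]
  have hf0 : f 0 = 2 * y := by simp [hf]
  rw [hf0, hy]
  have h2x' : (2 + x) ≠ 0 := h2x.ne'
  field_simp
  ring
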